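/- Let Φ be a reduced root system and R a commutative ring. For all p,q ≥ 1, ω^p ∈ C^p(Φ,R) and ω^q ∈ C^q(Φ,R), the signed reversal of a cup product satisfies ρ̂^{p+q}(ω^p ∪ ω^q) = (−1)^{pq+1} (ρ̂^q ω^q) ∪ (ρ̂^p ω^p); equivalently, ρ̂^{p+q}(ω^p ∪ ω^q) = (−1)^{κ_{p+q}+κ_p+κ_q} (ρ̂^q ω^q) ∪ (ρ̂^p ω^p), since κ_{p+q} + κ_p + κ_q ≡ pq + 1 (mod 2). -/

import Mathlib

open scoped RealInnerProductSpace

/-- A reduced root system `Φ` in a real inner product space `V`: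
a finite set of nonzero vectors spanning `V`, closed under the reflections it determines,
with integral Cartan numbers, such that the only multiples of a root in `Φ` are `±α`. -/
structure ReducedRootSystem (V : Type) [NormedAddCommGroup V] [InnerProductSpace ℝ V] :
    Type where
  roots : Set V
  finite : roots.Finite
  nonzero : ∀ α ∈ roots, α ≠ 0
  spans : Submodule.span ℝ roots = ⊤
  reflect_mem : ∀ α ∈ roots, ∀ β ∈ roots, β - (2 * ⟪β, α⟫ / ⟪α, α⟫) • α ∈ roots
  integral : ∀ α ∈ roots, ∀ β ∈ roots, ∃ n : ℤ, 2 * ⟪β, α⟫ / ⟪α, α⟫ = (n : ℝ)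
  reduced : ∀ α ∈ roots, ∀ t : ℝ, t • α ∈ roots → t = 1 ∨ t = -1

variable {V : Type} [NormedAddCommGroup V] [InnerProductSpace ℝ V]

/-- `Φ₀ = Φ ∪ {0}`. -/
def rootsZero (Φ : ReducedRootSystem V) : Set V := insert 0 Φ.roots

/-- Contraction of a tuple at position `j` (adding the `j`-th and `(j+1)`-st entries). -/
def contractAt (l : List V) (j : ℕ) : List V :=
  l.take j ++ (l.getD j 0 + l.getD (j + 1) 0) :: l.drop (j + 2)

/-- `IsRootChainAux Φ n l`: the tuple `l` of length `n` is a generator of `T_n(Φ)`: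
`T₁(Φ) = Φ₀`, and an `n`-tuple with entries in `Φ₀` lies in `T_n(Φ)` iff all its
contractions lie in `T_{n-1}(Φ)`. -/
def IsRootChainAux (Φ : ReducedRootSystem V) : ℕ → List V → Prop
  | 0, _ => False
  | 1, l => ∃ r ∈ rootsZero Φ, l = [r]
  | n + 2, l => l.length = n + 2 ∧ (∀ r ∈ l, r ∈ rootsZero Φ) ∧
      ∀ j, j + 1 < l.length → IsRootChainAux Φ (n + 1) (contractAt l j)

/-- `l` is a generator of `T_{l.length}(Φ)`. -/
def IsRootChain (Φ : ReducedRootSystem V) (l : List V) : Prop := IsRootChainAux Φ l.length l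

open Classical in
/-- Evaluation of a cochain on a chain generator: tuples containing `0` are identified with
the zero chain `0ₙ`, on which any cochain vanishes. -/
noncomputable def chainEv {M : Type} [Zero M] (ω : List V → M) (l : List V) : M :=
  if (0 : V) ∈ l then 0 else ω l

/-- The coboundary operator `dⁿ` on cochains, `dⁿωⁿ(r₀|⋯|rₙ) = ωⁿ(∂ⁿ[r₀|⋯|rₙ])`. -/
noncomputable def cobd {M : Type} [AddCommGroup M] (ω : List V → M) (l : List V) : M :=
  chainEv ω l.tail
    + (∑ j ∈ Finset.range (l.length - 1), ((-1 : ℤ) ^ (j + 1)) • chainEv ω (contractAt l j))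
    - ((-1 : ℤ) ^ (l.length - 1)) • chainEv ω l.dropLast

/-- The cup product of a `p`-cochain `ωp` with a cochain `ωq`:
`(ωp ∪ ωq)(r₁|⋯|r_{p+q}) = ωp(r₁|⋯|r_p) · ωq(r_{p+1}|⋯|r_{p+q})`. -/
noncomputable def cup {R : Type} [CommRing R] (p : ℕ) (ωp ωq : List V → R)
    (l : List V) : R :=
  chainEv ωp (l.take p) * chainEv ωq (l.drop p)

/-- `κₙ = C(n+1,2) + 1`. -/
def kappa (n : ℕ) : ℕ := Nat.choose (n + 1) 2 + 1

/-- The signed reversal operator `ρ̂ⁿ` on `n`-cochains: `(ρ̂ⁿω)(φ) = (-1)^{κₙ} ω(ρⁿφ)`. -/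
noncomputable def rhoHat {M : Type} [AddCommGroup M] (n : ℕ) (ω : List V → M)
    (l : List V) : M :=
  ((-1 : ℤ) ^ kappa n) • ω l.reverse


private lemma twoChoose (n : ℕ) : 2 * Nat.choose (n + 1) 2 = n * (n + 1) := by
  induction n with
  | zero => rfl
  | succ k ih =>
    have : Nat.choose (k + 2) 2 = (k + 1) + Nat.choose (k + 1) 2 := by
      rw [Nat.choose_succ_succ]
      simp [Nat.choose_one_right]
    rw [this]
    nlinarith [ih]

private lemma kappa_key (p q : ℕ) :
    kappa p + kappa q + p * q + 1 = kappa (p + q) + 2 := by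
  have h1 := twoChoose p
  have h2 := twoChoose q
  have h3 := twoChoose (p + q)
  have hx : (p + q) * (p + q + 1) = p * (p + 1) + q * (q + 1) + 2 * (p * q) := by ring
  unfold kappa
  have h2' : 2 * (Nat.choose (p + 1) 2 + 1 + (Nat.choose (q + 1) 2 + 1) + p * q + 1)
      = 2 * (Nat.choose (p + q + 1) 2 + 1 + 2) := by
    nlinarith [h1, h2, h3, hx]
  omega

private lemma neg_one_pow_congr' {M : Type*} [Monoid M] [HasDistribNeg M] {a b : ℕ}
    (h : a % 2 = b % 2) : ((-1 : M)) ^ a = (-1) ^ b := by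
  conv_lhs => rw [← Nat.div_add_mod a 2]
  conv_rhs => rw [← Nat.div_add_mod b 2]
  rw [h, pow_add, pow_add, pow_mul, pow_mul, neg_one_sq, one_pow]
  simp

private lemma chainEv_rhoHat' {V : Type} [NormedAddCommGroup V] [InnerProductSpace ℝ V]
    {M : Type} [AddCommGroup M] (n : ℕ) (ω : List V → M) (m : List V) :
    chainEv (rhoHat n ω) m = ((-1 : ℤ) ^ kappa n) • chainEv ω m.reverse := by
  unfold chainEv rhoHat
  by_cases h : (0 : V) ∈ m <;> simp [h, List.mem_reverse]

/-- The signed reversal of a cup product satisfies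
`ρ̂^{p+q}(ωp ∪ ωq) = (-1)^{pq+1} (ρ̂^q ωq) ∪ (ρ̂^p ωp)`, equivalently
`ρ̂^{p+q}(ωp ∪ ωq) = (-1)^{κ_{p+q}+κ_p+κ_q} (ρ̂^q ωq) ∪ (ρ̂^p ωp)`,
since `κ_{p+q} + κ_p + κ_q ≡ pq + 1 (mod 2)`.  (Identities of `(p+q)`-cochains,
i.e. they hold on every chain in `T_{p+q}(Φ)`.) -/
theorem rhoHat_cup
    {V : Type} [NormedAddCommGroup V] [InnerProductSpace ℝ V] [FiniteDimensional ℝ V]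
    (Φ : ReducedRootSystem V) (R : Type) [CommRing R] (p q : ℕ) (hp : 1 ≤ p) (hq : 1 ≤ q)
    (ωp ωq : List V → R) :
    (∀ l : List V, l.length = p + q → IsRootChain Φ l →
        rhoHat (p + q) (cup p ωp ωq) l
          = ((-1 : ℤ) ^ (p * q + 1)) • cup q (rhoHat q ωq) (rhoHat p ωp) l) ∧
    (∀ l : List V, l.length = p + q → IsRootChain Φ l →
        rhoHat (p + q) (cup p ωp ωq) l
          = ((-1 : ℤ) ^ (kappa (p + q) + kappa p + kappa q)) •
              cup q (rhoHat q ωq) (rhoHat p ωp) l) ∧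
    (kappa (p + q) + kappa p + kappa q) % 2 = (p * q + 1) % 2 := by
  have key := kappa_key p q
  have hmod : (kappa (p + q) + kappa p + kappa q) % 2 = (p * q + 1) % 2 := by
    set m := p * q with hm
    omega
  have main : ∀ l : List V, l.length = p + q → IsRootChain Φ l →
      rhoHat (p + q) (cup p ωp ωq) l
        = ((-1 : ℤ) ^ (p * q + 1)) • cup q (rhoHat q ωq) (rhoHat p ωp) l := by
    intro l hl _
    have h1 : l.reverse.take p = (l.drop q).reverse := by
      rw [List.take_reverse, hl]
      congr 2
      omega
    have h2 : l.reverse.drop p = (l.take q).reverse := by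
      rw [List.drop_reverse, hl]
      congr 2
      omega
    have hsign : ((-1 : ℤ)) ^ (kappa (p + q))
        = (-1) ^ (p * q + 1) * ((-1) ^ (kappa q) * (-1) ^ (kappa p)) := by
      rw [← pow_add, ← pow_add]
      refine neg_one_pow_congr' ?_
      set m := p * q with hm
      omega
    simp only [rhoHat, cup, h1, h2, chainEv_rhoHat', List.reverse_reverse]
    rw [hsign]
    simp only [smul_mul_assoc, mul_smul_comm, smul_smul]
    rw [mul_comm (chainEv ωp (l.drop q).reverse) (chainEv ωq (l.take q).reverse)]
    ring_nf
  refine ⟨main, fun l hl hc => (main l hl hc).trans ?_, hmod⟩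
  congr 1
  exact (neg_one_pow_congr' hmod).symm
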